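/- Let T ⊆ [0,1), μ a Borel probability measure on T, A^(k)_i = [i·4^(-k),(i+1)·4^(-k)) ∩ T. Define I(k) to be the set of indices 4i+j (0 ≤ i < 4^(k-1), 0 ≤ j ≤ 3) such that (1/32)·μ(A^(k-1)_i) ≤ μ(A^(k)_{4i+j}) ≤ (1/2)·μ(A^(k)_{4i} ∪ A^(k)_{4i+2}) when j ∈ {0,2}, and (1/32)·μ(A^(k-1)_i) ≤ μ(A^(k)_{4i+j}) ≤ (1/2)·μ(A^(k)_{4i+1} ∪ A^(k)_{4i+3}) when j ∈ {1,3}. Then for each k ≥ 1, Σ_{i=0}^{4^k-1} (μ(A^(k)_i))^(1/2)·1[i ∉ I(k)] ≤ L·Σ_{i=0}^{4^(k-1)-1} (μ(A^(k-1)_i))^(1/2), where L = 2^(1/2)·(5/4). -/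

import Mathlib

open MeasureTheory ENNReal

/-- The level-`k` cell `A^{(k)}_i = [i·4^{-k}, (i+1)·4^{-k}) ∩ T`. -/
def Acell (T : Set ℝ) (k i : ℕ) : Set ℝ :=
  Set.Ico ((i : ℝ) * ((4:ℝ) ^ k)⁻¹) (((i : ℝ) + 1) * ((4:ℝ) ^ k)⁻¹) ∩ T

/-- `n = 4i+j ∈ I(k)`: the measure of `A^{(k-1)}_i` is well distributed among the children. -/
def goodIdx (T : Set ℝ) (μ : Measure ℝ) (k n : ℕ) : Prop :=
  if n % 4 = 0 ∨ n % 4 = 2 then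
    (1/32) * μ (Acell T (k-1) (n / 4)) ≤ μ (Acell T k n) ∧
      μ (Acell T k n) ≤ (1/2) * μ (Acell T k (4 * (n / 4)) ∪ Acell T k (4 * (n / 4) + 2))
  else
    (1/32) * μ (Acell T (k-1) (n / 4)) ≤ μ (Acell T k n) ∧
      μ (Acell T k n) ≤ (1/2) * μ (Acell T k (4 * (n / 4) + 1) ∪ Acell T k (4 * (n / 4) + 3))

lemma real_sqrt_add (a b : ℝ) (ha : 0 ≤ a) (hb : 0 ≤ b) :
    Real.sqrt a + Real.sqrt b ≤ Real.sqrt 2 * Real.sqrt (a + b) := by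
  rw [← Real.sqrt_mul (by norm_num : (0:ℝ) ≤ 2)]
  have h1 := Real.sq_sqrt ha
  have h2 := Real.sq_sqrt hb
  have h3 := Real.sqrt_nonneg a
  have h4 := Real.sqrt_nonneg b
  rw [show Real.sqrt a + Real.sqrt b ≤ Real.sqrt (2*(a+b)) ↔ _ from
    Real.le_sqrt (by positivity) (by positivity)]
  nlinarith [sq_nonneg (Real.sqrt a - Real.sqrt b)]

lemma ennreal_sqrt_add (x y : ℝ≥0∞) :
    x ^ ((1:ℝ)/2) + y ^ ((1:ℝ)/2) ≤ ENNReal.ofReal (Real.sqrt 2) * (x + y) ^ ((1:ℝ)/2) := by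
  rcases eq_or_ne x ∞ with rfl | hx
  · have : (⊤ + y) ^ ((1:ℝ)/2) = (⊤ : ℝ≥0∞) := by
      simp [ENNReal.top_rpow_of_pos (by norm_num : (0:ℝ) < 1/2)]
    rw [this, ENNReal.mul_top (by simp [Real.sqrt_pos.mpr (by norm_num : (0:ℝ) < 2)] :
      ENNReal.ofReal (Real.sqrt 2) ≠ 0)]
    exact le_top
  rcases eq_or_ne y ∞ with rfl | hy
  · have : (x + ⊤) ^ ((1:ℝ)/2) = (⊤ : ℝ≥0∞) := by
      simp [ENNReal.top_rpow_of_pos (by norm_num : (0:ℝ) < 1/2)]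
    rw [this, ENNReal.mul_top (by simp [Real.sqrt_pos.mpr (by norm_num : (0:ℝ) < 2)] :
      ENNReal.ofReal (Real.sqrt 2) ≠ 0)]
    exact le_top
  rw [← ENNReal.ofReal_toReal hx, ← ENNReal.ofReal_toReal hy]
  rw [← ENNReal.ofReal_add toReal_nonneg toReal_nonneg]
  rw [ENNReal.ofReal_rpow_of_nonneg toReal_nonneg (by norm_num : (0:ℝ) ≤ 1/2),
      ENNReal.ofReal_rpow_of_nonneg toReal_nonneg (by norm_num : (0:ℝ) ≤ 1/2),
      ENNReal.ofReal_rpow_of_nonneg (by positivity) (by norm_num : (0:ℝ) ≤ 1/2),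
      ← ENNReal.ofReal_add (by positivity) (by positivity),
      ← ENNReal.ofReal_mul (Real.sqrt_nonneg 2)]
  apply ENNReal.ofReal_le_ofReal
  rw [← Real.sqrt_eq_rpow, ← Real.sqrt_eq_rpow, ← Real.sqrt_eq_rpow]
  exact real_sqrt_add _ _ toReal_nonneg toReal_nonneg

/-- Carathéodory split: if `A ⊆ P ∩ S` and `B ⊆ P \ S` with `S` measurable,
then `μ A + μ B ≤ μ P`, for arbitrary (possibly nonmeasurable) `A, B, P`. -/
lemma meas_add_le (μ : Measure ℝ) {A B P S : Set ℝ} (hS : MeasurableSet S)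
    (hA : A ⊆ P ∩ S) (hB : B ⊆ P \ S) : μ A + μ B ≤ μ P := by
  calc μ A + μ B ≤ μ (P ∩ S) + μ (P \ S) :=
        add_le_add (measure_mono hA) (measure_mono hB)
    _ = μ P := measure_inter_add_diff P hS

/-- Per-pair bound: at most one of the two children can exceed half the pair mass. -/
lemma pair_bound (gA gB : Prop) [Decidable gA] [Decidable gB] (mA mB e q : ℝ≥0∞)
    (hsum : mA + mB ≤ e)
    (hA : ¬gA → mA ≤ q ∨ (1/2) * e < mA)
    (hB : ¬gB → mB ≤ q ∨ (1/2) * e < mB) :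
    ((if gA then 0 else mA ^ ((1:ℝ)/2)) + (if gB then 0 else mB ^ ((1:ℝ)/2))
        ≤ e ^ ((1:ℝ)/2) + q ^ ((1:ℝ)/2)) ∨
    ((if gA then 0 else mA ^ ((1:ℝ)/2)) + (if gB then 0 else mB ^ ((1:ℝ)/2))
        ≤ q ^ ((1:ℝ)/2) + q ^ ((1:ℝ)/2)) := by
  have mono : ∀ {a b : ℝ≥0∞}, a ≤ b → a ^ ((1:ℝ)/2) ≤ b ^ ((1:ℝ)/2) :=
    fun h => ENNReal.rpow_le_rpow h (by norm_num)
  have hAe : mA ≤ e := le_trans le_self_add hsum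
  have hBe : mB ≤ e := le_trans le_add_self hsum
  by_cases gA' : gA <;> by_cases gB' : gB <;>
    simp only [gA', gB', if_true, if_false]
  · right; simpa using zero_le _
  · rcases hB gB' with h | _
    · right; simpa using le_trans (mono h) le_self_add
    · left; simpa using le_trans (mono hBe) le_self_add
  · rcases hA gA' with h | _
    · right; simpa using le_trans (mono h) le_self_add
    · left; simpa using le_trans (mono hAe) le_self_add
  · rcases hA gA' with h1 | h1
    · rcases hB gB' with h2 | h2
      · right; exact add_le_add (mono h1) (mono h2)
      · left; rw [add_comm (e ^ ((1:ℝ)/2))]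
        exact add_le_add (mono h1) (mono hBe)
    · rcases hB gB' with h2 | h2
      · left; exact add_le_add (mono hAe) (mono h2)
      · exfalso
        have hlt : e < mA + mB := by
          have hhalf : (1/2 : ℝ≥0∞) + 1/2 = 1 := by
            simpa using ENNReal.add_halves (1 : ℝ≥0∞)
          calc e = (1/2) * e + (1/2) * e := by rw [← add_mul, hhalf, one_mul]
            _ < mA + mB := ENNReal.add_lt_add h1 h2
        exact absurd hsum (not_le.mpr hlt)

lemma sum_range_four_mul (f : ℕ → ℝ≥0∞) (m : ℕ) :
    ∑ n ∈ Finset.range (4 * m), f n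
      = ∑ i ∈ Finset.range m, (f (4*i) + f (4*i+1) + f (4*i+2) + f (4*i+3)) := by
  induction m with
  | zero => simp
  | succ m ih =>
    rw [Finset.sum_range_succ, ← ih, Nat.mul_succ,
      show 4*m+4 = (4*m+3)+1 by ring, Finset.sum_range_succ,
      show 4*m+3 = (4*m+2)+1 by ring, Finset.sum_range_succ,
      show 4*m+2 = (4*m+1)+1 by ring, Finset.sum_range_succ,
      Finset.sum_range_succ]
    ring

/-- child interval inclusion -/
lemma Acell_child_subset (T : Set ℝ) (q i j : ℕ) (hj : j ≤ 3) :
    Acell T (q+1) (4*i+j) ⊆ Acell T q i := by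
  rintro x ⟨⟨h1, h2⟩, hxT⟩
  set t : ℝ := ((4:ℝ)^q)⁻¹ with ht
  have ht0 : (0:ℝ) < t := by rw [ht]; positivity
  have hpow : ((4:ℝ)^(q+1))⁻¹ = t / 4 := by
    rw [ht, pow_succ, mul_inv, div_eq_mul_inv]
  have hcast : ((4*i+j:ℕ):ℝ) = 4*(i:ℝ)+(j:ℝ) := by push_cast; ring
  rw [hcast, hpow] at h1 h2
  have hj' : (j:ℝ) ≤ 3 := by exact_mod_cast hj
  have hj0 : (0:ℝ) ≤ (j:ℝ) := Nat.cast_nonneg j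
  refine ⟨⟨?_, ?_⟩, hxT⟩
  · have key : (i:ℝ) * t ≤ (4*(i:ℝ)+(j:ℝ)) * (t/4) := by
      nlinarith [mul_nonneg hj0 ht0.le]
    linarith
  · have key : (4*(i:ℝ)+(j:ℝ)+1) * (t/4) ≤ ((i:ℝ)+1) * t := by
      nlinarith [mul_nonneg (by linarith : (0:ℝ) ≤ 3 - (j:ℝ)) ht0.le]
    linarith

/-- disjointness of distinct level intervals -/
lemma Ico_level_disjoint (k n m : ℕ) (h : n ≠ m) :
    Set.Ico ((n:ℝ) * ((4:ℝ)^k)⁻¹) (((n:ℝ)+1) * ((4:ℝ)^k)⁻¹)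
      ∩ Set.Ico ((m:ℝ) * ((4:ℝ)^k)⁻¹) (((m:ℝ)+1) * ((4:ℝ)^k)⁻¹) = ∅ := by
  ext x
  simp only [Set.mem_inter_iff, Set.mem_Ico, Set.mem_empty_iff_false, iff_false, not_and]
  intro h1 h2 h3
  exfalso
  have hinv : (0:ℝ) < ((4:ℝ)^k)⁻¹ := by positivity
  rcases h.lt_or_gt with hc | hc
  · have : ((n:ℝ)+1) ≤ (m:ℝ) := by exact_mod_cast hc
    nlinarith
  · have : ((m:ℝ)+1) ≤ (n:ℝ) := by exact_mod_cast hc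
    nlinarith

/-- The combining (endgame) inequality. -/
lemma endgame (e o p tE tO : ℝ≥0∞) (heo : e + o ≤ p)
    (hE : tE ≤ e ^ ((1:ℝ)/2) + ((1/32 : ℝ≥0∞) * p) ^ ((1:ℝ)/2)
        ∨ tE ≤ ((1/32 : ℝ≥0∞) * p) ^ ((1:ℝ)/2) + ((1/32 : ℝ≥0∞) * p) ^ ((1:ℝ)/2))
    (hO : tO ≤ o ^ ((1:ℝ)/2) + ((1/32 : ℝ≥0∞) * p) ^ ((1:ℝ)/2)
        ∨ tO ≤ ((1/32 : ℝ≥0∞) * p) ^ ((1:ℝ)/2) + ((1/32 : ℝ≥0∞) * p) ^ ((1:ℝ)/2)) :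
    tE + tO ≤ ENNReal.ofReal (Real.sqrt 2 * (5/4)) * p ^ ((1:ℝ)/2) := by
  set s := Real.sqrt 2 with hs
  have hs0 : 0 ≤ s := Real.sqrt_nonneg 2
  have hs2 : s^2 = 2 := Real.sq_sqrt (by norm_num)
  have hs14 : (1.4:ℝ) ≤ s := by nlinarith
  set a := p ^ ((1:ℝ)/2) with ha
  have mono : ∀ {x y : ℝ≥0∞}, x ≤ y → x ^ ((1:ℝ)/2) ≤ y ^ ((1:ℝ)/2) :=
    fun h => ENNReal.rpow_le_rpow h (by norm_num)
  have hcL : ((1/32 : ℝ≥0∞) * p) ^ ((1:ℝ)/2) = ENNReal.ofReal (s/8) * a := by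
    rw [ENNReal.mul_rpow_of_nonneg _ _ (by norm_num : (0:ℝ) ≤ 1/2)]
    congr 1
    rw [show (1/32 : ℝ≥0∞) = ENNReal.ofReal (1/32) by
      rw [ENNReal.ofReal_div_of_pos (by norm_num)]; norm_num]
    rw [ENNReal.ofReal_rpow_of_pos (by norm_num)]
    congr 1
    rw [← Real.sqrt_eq_rpow, show (1/32:ℝ) = (s/8)^2 by nlinarith,
      Real.sqrt_sq (by positivity)]
  have hea : e ^ ((1:ℝ)/2) ≤ ENNReal.ofReal 1 * a := by
    rw [ENNReal.ofReal_one, one_mul]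
    exact mono (le_trans le_self_add heo)
  have hoa : o ^ ((1:ℝ)/2) ≤ ENNReal.ofReal 1 * a := by
    rw [ENNReal.ofReal_one, one_mul]
    exact mono (le_trans le_add_self heo)
  have heoa : e ^ ((1:ℝ)/2) + o ^ ((1:ℝ)/2) ≤ ENNReal.ofReal s * a :=
    le_trans (ennreal_sqrt_add e o) (mul_le_mul_right (mono heo) _)
  have key : ∀ c : ℝ, 0 ≤ c → c ≤ s * (5/4) →
      ENNReal.ofReal c * a ≤ ENNReal.ofReal (s * (5/4)) * a :=
    fun c _ hc => mul_le_mul_left (ENNReal.ofReal_le_ofReal hc) a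
  have comb : ∀ c1 c2 : ℝ, 0 ≤ c1 → 0 ≤ c2 →
      ENNReal.ofReal c1 * a + ENNReal.ofReal c2 * a = ENNReal.ofReal (c1 + c2) * a := by
    intro c1 c2 h1 h2
    rw [← add_mul, ← ENNReal.ofReal_add h1 h2]
  rcases hE with hE | hE <;> rcases hO with hO | hO
  · calc tE + tO ≤ (e ^ ((1:ℝ)/2) + ENNReal.ofReal (s/8) * a)
          + (o ^ ((1:ℝ)/2) + ENNReal.ofReal (s/8) * a) := by
          rw [← hcL]; exact add_le_add hE hO
      _ = (e ^ ((1:ℝ)/2) + o ^ ((1:ℝ)/2)) + (ENNReal.ofReal (s/8) * a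
          + ENNReal.ofReal (s/8) * a) := by ring
      _ ≤ ENNReal.ofReal s * a + ENNReal.ofReal (s/8 + s/8) * a := by
          rw [← comb _ _ (by positivity) (by positivity)]
          exact add_le_add heoa le_rfl
      _ = ENNReal.ofReal (s + (s/8 + s/8)) * a := comb _ _ hs0 (by positivity)
      _ ≤ _ := key _ (by positivity) (by nlinarith)
  · calc tE + tO ≤ (ENNReal.ofReal 1 * a + ENNReal.ofReal (s/8) * a)
          + (ENNReal.ofReal (s/8) * a + ENNReal.ofReal (s/8) * a) := by
          rw [← hcL]
          exact add_le_add (le_trans hE (add_le_add hea le_rfl)) hO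
      _ = ENNReal.ofReal (1 + s/8) * a + ENNReal.ofReal (s/8 + s/8) * a := by
          rw [comb _ _ (by norm_num) (by positivity), comb _ _ (by positivity) (by positivity)]
      _ = ENNReal.ofReal ((1 + s/8) + (s/8 + s/8)) * a := comb _ _ (by positivity) (by positivity)
      _ ≤ _ := key _ (by positivity) (by nlinarith)
  · calc tE + tO ≤ (ENNReal.ofReal (s/8) * a + ENNReal.ofReal (s/8) * a)
          + (ENNReal.ofReal 1 * a + ENNReal.ofReal (s/8) * a) := by
          rw [← hcL]
          exact add_le_add hE (le_trans hO (add_le_add hoa le_rfl))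
      _ = ENNReal.ofReal (s/8 + s/8) * a + ENNReal.ofReal (1 + s/8) * a := by
          rw [comb _ _ (by positivity) (by positivity), comb _ _ (by norm_num) (by positivity)]
      _ = ENNReal.ofReal ((s/8 + s/8) + (1 + s/8)) * a := comb _ _ (by positivity) (by positivity)
      _ ≤ _ := key _ (by positivity) (by nlinarith)
  · calc tE + tO ≤ (ENNReal.ofReal (s/8) * a + ENNReal.ofReal (s/8) * a)
          + (ENNReal.ofReal (s/8) * a + ENNReal.ofReal (s/8) * a) := by
          rw [← hcL]; exact add_le_add hE hO
      _ = ENNReal.ofReal (s/8 + s/8) * a + ENNReal.ofReal (s/8 + s/8) * a := by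
          rw [comb _ _ (by positivity) (by positivity)]
      _ = ENNReal.ofReal ((s/8 + s/8) + (s/8 + s/8)) * a := comb _ _ (by positivity) (by positivity)
      _ ≤ _ := key _ (by positivity) (by nlinarith)

open Classical in
theorem stmt7 (T : Set ℝ) (hT : T ⊆ Set.Ico (0:ℝ) 1) (hTne : T.Nonempty)
    (μ : Measure ℝ) [IsProbabilityMeasure μ] (hμT : μ T = 1)
    (k : ℕ) (hk : 1 ≤ k) :
    ∑ n ∈ Finset.range (4 ^ k),
        (if goodIdx T μ k n then 0 else (μ (Acell T k n)) ^ ((1:ℝ)/2)) ≤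
      ENNReal.ofReal (Real.sqrt 2 * (5/4)) *
        ∑ i ∈ Finset.range (4 ^ (k - 1)), (μ (Acell T (k-1) i)) ^ ((1:ℝ)/2) := by
  obtain ⟨q, rfl⟩ : ∃ q, k = q + 1 := ⟨k - 1, (Nat.succ_pred_eq_of_pos hk).symm⟩
  simp only [Nat.add_sub_cancel]
  rw [show (4:ℕ)^(q+1) = 4 * 4^q by rw [pow_succ]; ring, sum_range_four_mul,
    Finset.mul_sum]
  apply Finset.sum_le_sum
  intro i _
  set p := μ (Acell T q i) with hp
  -- index arithmetic
  have hd0 : (4*i) / 4 = i := by omega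
  have hd1 : (4*i+1) / 4 = i := by omega
  have hd2 : (4*i+2) / 4 = i := by omega
  have hd3 : (4*i+3) / 4 = i := by omega
  have hm0 : (4*i) % 4 = 0 := by omega
  have hm1 : (4*i+1) % 4 = 1 := by omega
  have hm2 : (4*i+2) % 4 = 2 := by omega
  have hm3 : (4*i+3) % 4 = 3 := by omega
  set E := Acell T (q+1) (4*i) ∪ Acell T (q+1) (4*i+2) with hE
  set O := Acell T (q+1) (4*i+1) ∪ Acell T (q+1) (4*i+3) with hO
  -- goodIdx unfoldings
  have hg0 : goodIdx T μ (q+1) (4*i) ↔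
      ((1/32) * p ≤ μ (Acell T (q+1) (4*i)) ∧ μ (Acell T (q+1) (4*i)) ≤ (1/2) * μ E) := by
    simp [goodIdx, hd0, hm0, hE, hp]
  have hg2 : goodIdx T μ (q+1) (4*i+2) ↔
      ((1/32) * p ≤ μ (Acell T (q+1) (4*i+2)) ∧ μ (Acell T (q+1) (4*i+2)) ≤ (1/2) * μ E) := by
    simp [goodIdx, hd2, hm2, hE, hp]
  have hg1 : goodIdx T μ (q+1) (4*i+1) ↔
      ((1/32) * p ≤ μ (Acell T (q+1) (4*i+1)) ∧ μ (Acell T (q+1) (4*i+1)) ≤ (1/2) * μ O) := by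
    simp [goodIdx, hd1, hm1, hO, hp]
  have hg3 : goodIdx T μ (q+1) (4*i+3) ↔
      ((1/32) * p ≤ μ (Acell T (q+1) (4*i+3)) ∧ μ (Acell T (q+1) (4*i+3)) ≤ (1/2) * μ O) := by
    simp [goodIdx, hd3, hm3, hO, hp]
  -- geometric facts
  have hsubI : ∀ n : ℕ, Acell T (q+1) n ⊆
      Set.Ico ((n:ℝ) * ((4:ℝ)^(q+1))⁻¹) (((n:ℝ)+1) * ((4:ℝ)^(q+1))⁻¹) :=
    fun n => Set.inter_subset_left
  have hdisjA : ∀ n m : ℕ, n ≠ m → ∀ x, x ∈ Acell T (q+1) m →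
      x ∉ Set.Ico ((n:ℝ) * ((4:ℝ)^(q+1))⁻¹) (((n:ℝ)+1) * ((4:ℝ)^(q+1))⁻¹) := by
    intro n m h x hx hmem
    have h1 := Ico_level_disjoint (q+1) n m h
    have h2 : x ∈ (∅ : Set ℝ) := h1 ▸ Set.mem_inter hmem (hsubI m hx)
    exact h2
  have hchild : ∀ j : ℕ, j ≤ 3 → Acell T (q+1) (4*i+j) ⊆ Acell T q i :=
    fun j hj => Acell_child_subset T q i j hj
  have hchild0 : Acell T (q+1) (4*i) ⊆ Acell T q i := by
    have := hchild 0 (by norm_num); simpa using this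
  -- measure sums
  have hEsum : μ (Acell T (q+1) (4*i)) + μ (Acell T (q+1) (4*i+2)) ≤ μ E := by
    apply meas_add_le μ (S := Set.Ico (((4*i:ℕ):ℝ) * ((4:ℝ)^(q+1))⁻¹)
      ((((4*i:ℕ):ℝ)+1) * ((4:ℝ)^(q+1))⁻¹)) measurableSet_Ico
    · exact Set.subset_inter Set.subset_union_left (hsubI (4*i))
    · intro x hx
      exact ⟨Set.subset_union_right hx, hdisjA (4*i) (4*i+2) (by omega) x hx⟩
  have hOsum : μ (Acell T (q+1) (4*i+1)) + μ (Acell T (q+1) (4*i+3)) ≤ μ O := by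
    apply meas_add_le μ (S := Set.Ico (((4*i+1:ℕ):ℝ) * ((4:ℝ)^(q+1))⁻¹)
      ((((4*i+1:ℕ):ℝ)+1) * ((4:ℝ)^(q+1))⁻¹)) measurableSet_Ico
    · exact Set.subset_inter Set.subset_union_left (hsubI (4*i+1))
    · intro x hx
      exact ⟨Set.subset_union_right hx, hdisjA (4*i+1) (4*i+3) (by omega) x hx⟩
  have hPsum : μ E + μ O ≤ p := by
    apply meas_add_le μ (S := Set.Ico (((4*i:ℕ):ℝ) * ((4:ℝ)^(q+1))⁻¹)
        ((((4*i:ℕ):ℝ)+1) * ((4:ℝ)^(q+1))⁻¹)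
        ∪ Set.Ico (((4*i+2:ℕ):ℝ) * ((4:ℝ)^(q+1))⁻¹)
        ((((4*i+2:ℕ):ℝ)+1) * ((4:ℝ)^(q+1))⁻¹))
      (measurableSet_Ico.union measurableSet_Ico)
    · apply Set.subset_inter
      · exact Set.union_subset hchild0 (hchild 2 (by norm_num))
      · exact Set.union_subset (fun x hx => Set.mem_union_left _ (hsubI _ hx))
          (fun x hx => Set.mem_union_right _ (hsubI _ hx))
    · rintro x (hx | hx)
      · refine ⟨hchild 1 (by norm_num) hx, ?_⟩
        rintro (h | h)
        · exact hdisjA (4*i) (4*i+1) (by omega) x hx h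
        · exact hdisjA (4*i+2) (4*i+1) (by omega) x hx h
      · refine ⟨hchild 3 (by norm_num) hx, ?_⟩
        rintro (h | h)
        · exact hdisjA (4*i) (4*i+3) (by omega) x hx h
        · exact hdisjA (4*i+2) (4*i+3) (by omega) x hx h
  -- pair disjunctions
  have hpairE := pair_bound (goodIdx T μ (q+1) (4*i)) (goodIdx T μ (q+1) (4*i+2))
    (μ (Acell T (q+1) (4*i))) (μ (Acell T (q+1) (4*i+2))) (μ E) ((1/32) * p) hEsum
    (by intro h
        rw [hg0] at h
        rcases not_and_or.mp h with h' | h'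
        · exact Or.inl (not_le.mp h').le
        · exact Or.inr (not_le.mp h'))
    (by intro h
        rw [hg2] at h
        rcases not_and_or.mp h with h' | h'
        · exact Or.inl (not_le.mp h').le
        · exact Or.inr (not_le.mp h'))
  have hpairO := pair_bound (goodIdx T μ (q+1) (4*i+1)) (goodIdx T μ (q+1) (4*i+3))
    (μ (Acell T (q+1) (4*i+1))) (μ (Acell T (q+1) (4*i+3))) (μ O) ((1/32) * p) hOsum
    (by intro h
        rw [hg1] at h
        rcases not_and_or.mp h with h' | h'
        · exact Or.inl (not_le.mp h').le
        · exact Or.inr (not_le.mp h'))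
    (by intro h
        rw [hg3] at h
        rcases not_and_or.mp h with h' | h'
        · exact Or.inl (not_le.mp h').le
        · exact Or.inr (not_le.mp h'))
  have hre : (if goodIdx T μ (q+1) (4*i) then 0 else (μ (Acell T (q+1) (4*i))) ^ ((1:ℝ)/2))
      + (if goodIdx T μ (q+1) (4*i+1) then 0 else (μ (Acell T (q+1) (4*i+1))) ^ ((1:ℝ)/2))
      + (if goodIdx T μ (q+1) (4*i+2) then 0 else (μ (Acell T (q+1) (4*i+2))) ^ ((1:ℝ)/2))
      + (if goodIdx T μ (q+1) (4*i+3) then 0 else (μ (Acell T (q+1) (4*i+3))) ^ ((1:ℝ)/2))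
      = ((if goodIdx T μ (q+1) (4*i) then 0 else (μ (Acell T (q+1) (4*i))) ^ ((1:ℝ)/2))
          + (if goodIdx T μ (q+1) (4*i+2) then 0 else (μ (Acell T (q+1) (4*i+2))) ^ ((1:ℝ)/2)))
        + ((if goodIdx T μ (q+1) (4*i+1) then 0 else (μ (Acell T (q+1) (4*i+1))) ^ ((1:ℝ)/2))
          + (if goodIdx T μ (q+1) (4*i+3) then 0 else (μ (Acell T (q+1) (4*i+3))) ^ ((1:ℝ)/2))) := by
    ring
  rw [hre]
  exact endgame (μ E) (μ O) p _ _ hPsum hpairE hpairO
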